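/- Let A and B be positive invertible bounded operators on a complex Hilbert space H and let m, M be real numbers with 1 < m < M such that m·B ≤ A ≤ M·B. Then (1 + (1/2)·((m − 1)/(m + 1))²)·(A ♯ B) ≤ (A + B)/2. -/

import Mathlib

set_option synthInstance.maxHeartbeats 1000000
set_option maxHeartbeats 1000000

open scoped InnerProductSpace

variable {H : Type*} [NormedAddCommGroup H] [InnerProductSpace ℂ H] [CompleteSpace H]

/-- The operator geometric mean `A ♯ B = A^(1/2) (A^(-1/2) B A^(-1/2))^(1/2) A^(1/2)`,
where square roots are given by the continuous functional calculus. -/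
noncomputable def geomMean (A B : H →L[ℂ] H) : H →L[ℂ] H :=
  CFC.sqrt A * CFC.sqrt (Ring.inverse (CFC.sqrt A) * B * Ring.inverse (CFC.sqrt A)) * CFC.sqrt A

private lemma scalar_key {m : ℝ} (hm : 1 < m) {x : ℝ} (hx0 : 0 ≤ x) (hx : x ≤ 1 / m) :
    (1 + (1 / 2) * ((m - 1) / (m + 1)) ^ 2) * Real.sqrt x ≤ (1 + x) / 2 := by
  have hm0 : (0:ℝ) < m := lt_trans one_pos hm
  set r := Real.sqrt m with hrdef
  have hr2 : r ^ 2 = m := Real.sq_sqrt hm0.le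
  have hr1 : 1 < r := by nlinarith [Real.sqrt_nonneg m]
  have hr0 : 0 < r := lt_trans one_pos hr1
  set s := Real.sqrt x with hsdef
  have hs2 : s ^ 2 = x := Real.sq_sqrt hx0
  have hs0 : 0 ≤ s := Real.sqrt_nonneg x
  have hsr : s ≤ 1 / r := by
    have : Real.sqrt x ≤ Real.sqrt (1 / m) := Real.sqrt_le_sqrt hx
    rwa [one_div, Real.sqrt_inv, ← hrdef, ← one_div] at this
  set c := ((m - 1) / (m + 1)) ^ 2 with hcdef
  have hc0 : 0 ≤ c := sq_nonneg _
  have key : c * s ≤ (1 - s) ^ 2 := by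
    have h1 : c * s ≤ c * (1 / r) := mul_le_mul_of_nonneg_left hsr hc0
    have h2 : c * (1 / r) ≤ (1 - 1 / r) ^ 2 := by
      have key2 : r * (r + 1) ^ 2 ≤ (r ^ 2 + 1) ^ 2 := by
        nlinarith [mul_nonneg (sq_nonneg (r - 1)) (show (0:ℝ) ≤ r ^ 2 + r + 1 by positivity)]
      have e1 : c * (1 / r) = (r - 1) ^ 2 * (r + 1) ^ 2 / ((r ^ 2 + 1) ^ 2 * r) := by
        rw [hcdef, ← hr2]; field_simp; ring
      have e2 : (1 - 1 / r) ^ 2 = (r - 1) ^ 2 / r ^ 2 := by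
        field_simp
      rw [e1, e2, div_le_div_iff₀ (by positivity) (by positivity)]
      nlinarith [mul_nonneg (mul_nonneg (sq_nonneg (r - 1)) hr0.le) (sub_nonneg.mpr key2)]
    have h3 : (1 - 1 / r) ^ 2 ≤ (1 - s) ^ 2 := by
      have h1r : 1 / r ≤ 1 := by rw [div_le_one hr0]; exact hr1.le
      nlinarith
    linarith
  nlinarith

private lemma sqrt_eq_cfc_real (T : H →L[ℂ] H) (hT : 0 ≤ T) :
    CFC.sqrt T = cfc Real.sqrt T := by
  have hb : (0 : H →L[ℂ] H) ≤ cfc Real.sqrt T := cfc_nonneg fun x _ => Real.sqrt_nonneg x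
  have hbb : cfc Real.sqrt T * cfc Real.sqrt T = T := by
    rw [← cfc_mul Real.sqrt Real.sqrt T (Real.continuous_sqrt.continuousOn)
      (Real.continuous_sqrt.continuousOn)]
    rw [cfc_congr (g := fun x : ℝ => x)
      (fun x hx => Real.mul_self_sqrt (spectrum_nonneg_of_nonneg hT hx))]
    exact cfc_id' ℝ T
  exact CFC.sqrt_unique hbb hb

private lemma op_key {T : H →L[ℂ] H} (hT : 0 ≤ T) {k c : ℝ}
    (hTc : T ≤ algebraMap ℝ (H →L[ℂ] H) c)
    (hk : ∀ x ∈ Set.Icc (0:ℝ) c, k * Real.sqrt x ≤ (1 + x) / 2) :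
    k • CFC.sqrt T ≤ (1 / 2 : ℝ) • (1 + T) := by
  have hTsa : IsSelfAdjoint T := IsSelfAdjoint.of_nonneg hT
  have hspec : spectrum ℝ T ⊆ Set.Icc 0 c := by
    intro x hx
    refine ⟨spectrum_nonneg_of_nonneg hT hx, ?_⟩
    have hd : (0 : H →L[ℂ] H) ≤ algebraMap ℝ (H →L[ℂ] H) c - T := sub_nonneg.mpr hTc
    have hds := (StarOrderedRing.nonneg_iff_spectrum_nonneg (R := ℝ) _).mp hd
    have hmem : c - x ∈ spectrum ℝ (algebraMap ℝ (H →L[ℂ] H) c - T) := by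
      rw [← spectrum.singleton_sub_eq]
      exact Set.sub_mem_sub rfl hx
    linarith [hds _ hmem]
  have h1 : k • CFC.sqrt T = cfc (fun x : ℝ => k * Real.sqrt x) T := by
    rw [sqrt_eq_cfc_real T hT]
    exact (cfc_const_mul k Real.sqrt T Real.continuous_sqrt.continuousOn).symm
  have h2 : cfc (fun x : ℝ => (1 + x) / 2) T = (1 / 2 : ℝ) • (1 + T) := by
    calc cfc (fun x : ℝ => (1 + x) / 2) T
        = cfc (fun x : ℝ => (1 / 2 : ℝ) * ((1 : ℝ) + x)) T := cfc_congr (fun x _ => by ring)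
      _ = (1 / 2 : ℝ) • cfc (fun x : ℝ => (1 : ℝ) + x) T :=
          cfc_const_mul _ _ _ (by fun_prop)
      _ = (1 / 2 : ℝ) • ((1 : H →L[ℂ] H) + T) := by
          rw [cfc_const_add (1 : ℝ) (fun x : ℝ => x) T (by fun_prop), cfc_id' ℝ T, map_one]
  rw [h1, ← h2]
  exact cfc_mono fun x hx => hk x (hspec hx)

theorem operator_amgm_refinement_with_m (A B : H →L[ℂ] H) (m M : ℝ)
    (hA : 0 ≤ A) (hA' : IsUnit A) (hB : 0 ≤ B) (hB' : IsUnit B)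
    (hm : 1 < m) (hmM : m < M) (hmB : m • B ≤ A) (hMB : A ≤ M • B) :
    (1 + (1 / 2) * ((m - 1) / (m + 1)) ^ 2) • geomMean A B ≤ (1 / 2 : ℝ) • (A + B) := by
  have hm0 : (0:ℝ) < m := lt_trans one_pos hm
  set k : ℝ := 1 + (1 / 2) * ((m - 1) / (m + 1)) ^ 2 with hkdef
  set S : H →L[ℂ] H := CFC.sqrt A with hSdef
  have hSnn : (0 : H →L[ℂ] H) ≤ S := CFC.sqrt_nonneg A
  have hSsa : IsSelfAdjoint S := IsSelfAdjoint.of_nonneg hSnn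
  have hSS : S * S = A := CFC.sqrt_mul_sqrt_self A hA
  have hSu : IsUnit S := by
    rw [hSdef, CFC.sqrt_eq_cfc]
    have hns : ∀ x ∈ spectrum NNReal A, NNReal.sqrt x ≠ 0 := by
      intro x hx hx0
      rw [NNReal.sqrt_eq_zero] at hx0
      exact spectrum.zero_notMem NNReal hA' (hx0 ▸ hx)
    exact isUnit_cfc NNReal.sqrt A NNReal.continuous_sqrt.continuousOn hA hns
  set Si : H →L[ℂ] H := Ring.inverse S with hSidef
  have hSiS : Si * S = 1 := Ring.inverse_mul_cancel S hSu
  have hSSi : S * Si = 1 := Ring.mul_inverse_cancel S hSu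
  have hSisa : IsSelfAdjoint Si := by
    rw [IsSelfAdjoint, hSidef, ← Ring.inverse_star, hSsa.star_eq]
  set T : H →L[ℂ] H := Si * B * Si with hTdef
  have hTnn : (0 : H →L[ℂ] H) ≤ T := hSisa.conjugate_nonneg hB
  have hSTS : S * T * S = B := by
    have : S * (Si * B * Si) * S = (S * Si) * B * (Si * S) := by
      simp only [mul_assoc]
    rw [hTdef, this, hSSi, hSiS, one_mul, mul_one]
  have hSAS : Si * A * Si = 1 := by
    have : Si * (S * S) * Si = (Si * S) * (S * Si) := by simp only [mul_assoc]
    rw [← hSS, this, hSiS, hSSi, one_mul]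
  have hmT : m • T ≤ 1 := by
    have hco := hSisa.conjugate_le_conjugate hmB
    have hl : Si * (m • B) * Si = m • T := by
      rw [hTdef]
      simp only [mul_smul_comm, smul_mul_assoc]
    rw [hl, hSAS] at hco
    exact hco
  have hTc : T ≤ algebraMap ℝ (H →L[ℂ] H) (1 / m) := by
    rw [Algebra.algebraMap_eq_smul_one]
    have h := smul_le_smul_of_nonneg_left hmT (le_of_lt (inv_pos.mpr hm0))
    rw [smul_smul, inv_mul_cancel₀ hm0.ne', one_smul] at h
    simpa [one_div] using h
  have hkey : k • CFC.sqrt T ≤ (1 / 2 : ℝ) • (1 + T) :=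
    op_key hTnn hTc (fun x hx => scalar_key hm hx.1 hx.2)
  have hconj := hSsa.conjugate_le_conjugate hkey
  have hl : S * (k • CFC.sqrt T) * S = k • geomMean A B := by
    rw [geomMean]
    simp only [mul_smul_comm, smul_mul_assoc, ← hSdef, ← hSidef, ← hTdef]
  have hr : S * ((1 / 2 : ℝ) • (1 + T)) * S = (1 / 2 : ℝ) • (A + B) := by
    simp only [mul_smul_comm, smul_mul_assoc]
    congr 1
    rw [mul_add, add_mul, mul_one, hSS, hSTS]
  rw [hl, hr] at hconj
  exact hconj
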